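/- For every odd integer n ≥ 7 with n ≡ 1 (mod 3), the cycle graph C_n satisfies ζ(C_n) = (n − 1)(n − 4)/3 + ⌈2(n − 5)/3⌉ + 1. -/

import Mathlib

open SimpleGraph

/-- A proper vertex colouring of `G` using exactly `χ(G)` colours. -/
def IsChromaticColoring {V : Type*} (G : SimpleGraph V) (c : V → ℕ) : Prop :=
  (∀ u v, G.Adj u v → c u ≠ c v) ∧ ((Set.range c).ncard : ℕ∞) = G.chromaticNumber

/-- The set of chromatic completion edges for a colouring `c`: unordered pairs of
distinct non-adjacent vertices with different colours. -/
def completionEdges {V : Type*} (G : SimpleGraph V) (c : V → ℕ) : Set (Sym2 V) :=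
  {e | ∃ u v, e = s(u, v) ∧ u ≠ v ∧ ¬ G.Adj u v ∧ c u ≠ c v}

/-- The chromatic completion number `ζ(G)`. -/
noncomputable def zeta {V : Type*} (G : SimpleGraph V) : ℕ :=
  sSup {m | ∃ c : V → ℕ, IsChromaticColoring G c ∧ m = (completionEdges G c).ncard}

open Finset

section Aux

/-- The complement-style graph whose edges are the completion edges. -/
private def compGraph {V : Type*} (G : SimpleGraph V) (c : V → ℕ) : SimpleGraph V where
  Adj u v := u ≠ v ∧ ¬ G.Adj u v ∧ c u ≠ c v
  symm := ⟨fun u v ⟨h1, h2, h3⟩ => ⟨h1.symm, fun h => h2 h.symm, h3.symm⟩⟩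
  loopless := ⟨fun u h => h.1 rfl⟩

private instance {V : Type*} [DecidableEq V] (G : SimpleGraph V) [DecidableRel G.Adj]
    (c : V → ℕ) : DecidableRel (compGraph G c).Adj :=
  fun _ _ => inferInstanceAs (Decidable (_ ∧ _ ∧ _))

private lemma completionEdges_eq_edgeSet {V : Type*} (G : SimpleGraph V) (c : V → ℕ) :
    completionEdges G c = (compGraph G c).edgeSet := by
  ext e
  induction e using Sym2.ind with
  | _ u v =>
    rw [SimpleGraph.mem_edgeSet]
    constructor
    · rintro ⟨a, b, hab, h1, h2, h3⟩
      rw [Sym2.eq_iff] at hab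
      rcases hab with ⟨rfl, rfl⟩ | ⟨rfl, rfl⟩
      · exact ⟨h1, h2, h3⟩
      · exact ⟨h1.symm, fun h => h2 h.symm, h3.symm⟩
    · rintro ⟨h1, h2, h3⟩
      exact ⟨u, v, rfl, h1, h2, h3⟩

private lemma degree_compGraph {V : Type*} [Fintype V] [DecidableEq V]
    (G : SimpleGraph V) [DecidableRel G.Adj] (c : V → ℕ)
    (hp : ∀ u v, G.Adj u v → c u ≠ c v) (u : V) :
    Fintype.card V =
      G.degree u + #(univ.filter fun v => c v = c u) + (compGraph G c).degree u := by
  have hU : (univ.filter fun v => G.Adj u v) ∪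
      ((univ.filter fun v => c v = c u) ∪ (univ.filter fun v => (compGraph G c).Adj u v))
      = univ := by
    ext v
    simp only [mem_union, mem_filter, mem_univ, true_and, iff_true]
    by_cases h1 : c v = c u
    · exact Or.inr (Or.inl h1)
    by_cases h2 : G.Adj u v
    · exact Or.inl h2
    · refine Or.inr (Or.inr ⟨fun h => h1 (h ▸ rfl), h2, fun h => h1 h.symm⟩)
  have hd1 : Disjoint (univ.filter fun v => c v = c u)
      (univ.filter fun v => (compGraph G c).Adj u v) := by
    rw [Finset.disjoint_left]
    intro v hv1 hv2
    exact (mem_filter.mp hv2).2.2.2 ((mem_filter.mp hv1).2.symm)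
  have hd2 : Disjoint (univ.filter fun v => G.Adj u v)
      ((univ.filter fun v => c v = c u) ∪ (univ.filter fun v => (compGraph G c).Adj u v)) := by
    rw [Finset.disjoint_left]
    intro v hv1 hv2
    have hadj := (mem_filter.mp hv1).2
    rcases Finset.mem_union.mp hv2 with h | h
    · exact hp u v hadj ((mem_filter.mp h).2.symm)
    · exact (mem_filter.mp h).2.2.1 hadj
  have := congrArg Finset.card hU
  rw [Finset.card_union_of_disjoint hd2, Finset.card_union_of_disjoint hd1] at this
  rw [SimpleGraph.degree, SimpleGraph.neighborFinset_eq_filter,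
    SimpleGraph.degree, SimpleGraph.neighborFinset_eq_filter]
  rw [← Finset.card_univ]
  omega

private lemma cycle_degree {n : ℕ} (h : 3 ≤ n) (u : Fin n) :
    (cycleGraph n).degree u = 2 := by
  obtain ⟨m, rfl⟩ : ∃ m, n = m + 3 := ⟨n - 3, by omega⟩
  exact cycleGraph_degree_three_le

/-- The fundamental counting identity. -/
private lemma count_key {n : ℕ} (hn : 3 ≤ n) (c : Fin n → ℕ)
    (hp : ∀ u v, (cycleGraph n).Adj u v → c u ≠ c v) :
    n * n = 2 * n +
      (∑ j ∈ univ.image c, #(univ.filter fun a => c a = j) * #(univ.filter fun a => c a = j))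
      + 2 * (completionEdges (cycleGraph n) c).ncard := by
  have hncard : (completionEdges (cycleGraph n) c).ncard = #(compGraph (cycleGraph n) c).edgeFinset := by
    rw [completionEdges_eq_edgeSet, ← SimpleGraph.coe_edgeFinset, Set.ncard_coe_finset]
  have hhand := SimpleGraph.sum_degrees_eq_twice_card_edges (compGraph (cycleGraph n) c)
  have hsum : ∑ u : Fin n, #(univ.filter fun a => c a = c u) =
      ∑ j ∈ univ.image c, #(univ.filter fun a => c a = j) * #(univ.filter fun a => c a = j) := by
    rw [Finset.sum_comp (fun j => #(univ.filter fun a => c a = j)) c]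
    simp [smul_eq_mul, mul_comm]
  have hkey : ∀ u : Fin n, n = 2 + #(univ.filter fun a => c a = c u)
      + (compGraph (cycleGraph n) c).degree u := by
    intro u
    have := degree_compGraph (cycleGraph n) c hp u
    rwa [Fintype.card_fin, cycle_degree hn u] at this
  calc n * n = ∑ _u : Fin n, n := by
        rw [Finset.sum_const, Finset.card_univ, Fintype.card_fin, smul_eq_mul]
    _ = ∑ u : Fin n, (2 + #(univ.filter fun a => c a = c u)
          + (compGraph (cycleGraph n) c).degree u) := Finset.sum_congr rfl fun u _ => hkey u
    _ = (∑ _u : Fin n, 2) + (∑ u : Fin n, #(univ.filter fun a => c a = c u))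
          + ∑ u : Fin n, (compGraph (cycleGraph n) c).degree u := by
        rw [Finset.sum_add_distrib, Finset.sum_add_distrib]
    _ = _ := by
        rw [hsum, hhand, ← hncard, Finset.sum_const, Finset.card_univ, Fintype.card_fin,
          smul_eq_mul, mul_comm n 2]

private lemma one_le_sq {d : ℤ} (h : d ≠ 0) : 1 ≤ d ^ 2 := by
  have h1 := Int.one_le_abs h
  nlinarith [sq_abs d, abs_nonneg d]

private lemma int_ineq (a b c : ℤ) (hne : ¬(a = b ∧ b = c)) :
    (a + b + c) * (a + b + c) + 2 ≤ 3 * (a * a + b * b + c * c) := by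
  have key : 2 ≤ (a - b) ^ 2 + (b - c) ^ 2 + (c - a) ^ 2 := by
    by_cases hab : a = b
    · have hbc : b ≠ c := fun h => hne ⟨hab, h⟩
      have hca : c ≠ a := fun h => hbc (h.trans hab).symm
      have h1 := one_le_sq (sub_ne_zero.mpr hbc)
      have h2 := one_le_sq (sub_ne_zero.mpr hca)
      nlinarith [sq_nonneg (a - b)]
    · have h1 := one_le_sq (sub_ne_zero.mpr hab)
      by_cases hbc : b = c
      · have hca : c ≠ a := fun h => hab (hbc.trans h).symm
        have h2 := one_le_sq (sub_ne_zero.mpr hca)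
        nlinarith [sq_nonneg (b - c)]
      · have h2 := one_le_sq (sub_ne_zero.mpr hbc)
        nlinarith [sq_nonneg (c - a)]
  nlinarith [key]

private lemma sq_sum_lower (a b c n : ℕ) (h : a + b + c = n) (hm : n % 3 = 1) :
    n * n + 2 ≤ 3 * (a * a + b * b + c * c) := by
  have hne : ¬((a : ℤ) = b ∧ (b : ℤ) = c) := by
    rintro ⟨h1, h2⟩
    have e1 : a = b := by exact_mod_cast h1
    have e2 : b = c := by exact_mod_cast h2
    omega
  have hI := int_ineq a b c hne
  have hn : (a : ℤ) + b + c = n := by exact_mod_cast h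
  rw [hn] at hI
  exact_mod_cast hI

end Aux

section Coloring

/-- The balanced 3-colouring of the odd cycle with `n ≡ 1 (mod 3)`. -/
private def cyc3 (n : ℕ) (i : Fin n) : ℕ := if (i : ℕ) = n - 1 then 1 else (i : ℕ) % 3

private lemma cyc3_proper {n : ℕ} (hn : 7 ≤ n) (hm : n % 3 = 1) :
    ∀ u v : Fin n, (cycleGraph n).Adj u v → cyc3 n u ≠ cyc3 n v := by
  haveI : NeZero n := ⟨by omega⟩
  suffices h : ∀ u v : Fin n, (v - u : Fin n).val = 1 → cyc3 n u ≠ cyc3 n v by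
    intro u v hadj
    rcases cycleGraph_adj'.mp hadj with h1 | h1
    · exact (h v u h1).symm
    · exact h u v h1
  intro u v hsub
  have hv1 : v = u + 1 := by
    have : v - u = 1 := Fin.ext (by rw [hsub, Fin.val_one', Nat.mod_eq_of_lt (by omega)])
    rwa [sub_eq_iff_eq_add'] at this
  have h1n : (1 : ℕ) % n = 1 := Nat.mod_eq_of_lt (by omega)
  have hv : (v : ℕ) = ((u : ℕ) + 1) % n := by
    rw [hv1, Fin.add_def, Fin.val_one', h1n]
  have hu := u.isLt
  have hvlt := v.isLt
  have hcase : (v : ℕ) = (u : ℕ) + 1 ∨ ((u : ℕ) = n - 1 ∧ (v : ℕ) = 0) := by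
    rcases Nat.lt_or_ge ((u : ℕ) + 1) n with h | h
    · left; rw [hv, Nat.mod_eq_of_lt (by omega)]
    · right
      have h1 : (u : ℕ) = n - 1 := by omega
      refine ⟨h1, ?_⟩
      rw [hv, h1]
      have h2 : n - 1 + 1 = n := by omega
      rw [h2, Nat.mod_self]
  unfold cyc3
  split_ifs <;> omega

private lemma cyc3_image {n : ℕ} (hn : 7 ≤ n) :
    univ.image (cyc3 n) = ({0, 1, 2} : Finset ℕ) := by
  apply Finset.Subset.antisymm
  · intro a ha
    simp only [Finset.mem_image, mem_univ, true_and] at ha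
    obtain ⟨i, hi⟩ := ha
    unfold cyc3 at hi
    simp only [Finset.mem_insert, Finset.mem_singleton]
    split at hi <;> omega
  · intro a ha
    simp only [Finset.mem_insert, Finset.mem_singleton] at ha
    simp only [Finset.mem_image, mem_univ, true_and]
    rcases ha with rfl | rfl | rfl
    · refine ⟨⟨0, by omega⟩, ?_⟩
      show (if (0 : ℕ) = n - 1 then 1 else 0 % 3) = 0
      rw [if_neg (by omega)]
    · refine ⟨⟨1, by omega⟩, ?_⟩
      show (if (1 : ℕ) = n - 1 then 1 else 1 % 3) = 1
      rw [if_neg (by omega)]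
    · refine ⟨⟨2, by omega⟩, ?_⟩
      show (if (2 : ℕ) = n - 1 then 1 else 2 % 3) = 2
      rw [if_neg (by omega)]

private lemma countmod (N r : ℕ) (hr : r < 3) :
    #((range N).filter fun m => m % 3 = r) = N / 3 + if r < N % 3 then 1 else 0 := by
  induction N with
  | zero => simp
  | succ N ih =>
    rw [Finset.range_add_one, Finset.filter_insert]
    by_cases h : N % 3 = r
    · rw [h, if_pos rfl, Finset.card_insert_of_notMem (by simp), ih]
      split_ifs <;> omega
    · rw [if_neg h, ih]
      split_ifs <;> omega

private lemma fin_filter_card {n : ℕ} (p : ℕ → Prop) [DecidablePred p] :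
    #((univ : Finset (Fin n)).filter fun i => p i.val) = #((range n).filter p) := by
  have h1 : #((univ : Finset (Fin n)).filter fun i => p i.val)
      = ∑ i : Fin n, if p i.val then 1 else 0 :=
    Finset.card_filter (fun i : Fin n => p i.val) univ
  have h2 : #((range n).filter p) = ∑ i ∈ range n, if p i then 1 else 0 :=
    Finset.card_filter p (range n)
  rw [h1, h2]
  exact Fin.sum_univ_eq_sum_range (fun m => if p m then 1 else 0) n

private lemma cyc3_fiber {n : ℕ} (hn : 7 ≤ n) (hm : n % 3 = 1) (r : ℕ) (hr : r < 3) :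
    #((univ : Finset (Fin n)).filter fun i => cyc3 n i = r) =
      if r = 1 then n / 3 + 1 else n / 3 := by
  have key : #((univ : Finset (Fin n)).filter fun i => cyc3 n i = r)
      = #((range n).filter fun m => (if m = n - 1 then 1 else m % 3) = r) := by
    exact fin_filter_card (fun m => (if m = n - 1 then 1 else m % 3) = r)
  rw [key]
  interval_cases r
  · have he : ((range n).filter fun m => (if m = n - 1 then 1 else m % 3) = 0)
        = (range (n - 1)).filter fun m => m % 3 = 0 := by
      ext m
      simp only [Finset.mem_filter, Finset.mem_range]
      by_cases h : m = n - 1 <;> simp [h] <;> omega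
    rw [he, countmod (n - 1) 0 (by omega), if_neg (show ¬ 0 < (n - 1) % 3 by omega),
      if_neg (show ¬ (0 : ℕ) = 1 by norm_num)]
    omega
  · have he : ((range n).filter fun m => (if m = n - 1 then 1 else m % 3) = 1)
        = insert (n - 1) ((range (n - 1)).filter fun m => m % 3 = 1) := by
      ext m
      simp only [Finset.mem_filter, Finset.mem_range, Finset.mem_insert]
      by_cases h : m = n - 1 <;> simp [h] <;> omega
    rw [he, Finset.card_insert_of_notMem (by simp), countmod (n - 1) 1 (by omega),
      if_neg (show ¬ 1 < (n - 1) % 3 by omega), if_pos rfl]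
    omega
  · have he : ((range n).filter fun m => (if m = n - 1 then 1 else m % 3) = 2)
        = (range n).filter fun m => m % 3 = 2 := by
      ext m
      simp only [Finset.mem_filter, Finset.mem_range]
      by_cases h : m = n - 1 <;> simp [h] <;> omega
    rw [he, countmod n 2 (by omega), if_neg (show ¬ 2 < n % 3 by omega),
      if_neg (show ¬ (2 : ℕ) = 1 by norm_num)]
    omega

private lemma chrom_cycle {n : ℕ} (hn : 7 ≤ n) (hodd : Odd n) (hm : n % 3 = 1) :
    (cycleGraph n).chromaticNumber = 3 := by
  have hle : (cycleGraph n).chromaticNumber ≤ (3 : ℕ) := by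
    rw [chromaticNumber_le_iff_colorable, colorable_iff_exists_bdd_nat_coloring]
    refine ⟨Coloring.mk (cyc3 n) (fun {u v} h => cyc3_proper hn hm u v h), fun v => ?_⟩
    show cyc3 n v < 3
    unfold cyc3; split <;> omega
  have h2 : ¬ (cycleGraph n).Colorable 2 := by
    rintro ⟨C⟩
    have key : ∀ i : ℕ, ∀ h : i < n, ((C ⟨i, h⟩ : Fin 2) = C ⟨0, by omega⟩ ↔ i % 2 = 0) := by
      intro i
      induction i with
      | zero => intro h; simp
      | succ i ih =>
        intro h
        have hi : i < n := by omega
        have hadj : (cycleGraph n).Adj ⟨i, hi⟩ ⟨i + 1, h⟩ := by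
          rw [cycleGraph_adj']
          right
          rw [Fin.sub_val_of_le (Fin.mk_le_mk.mpr (by omega))]
          simp
        have hne := C.valid hadj
        have hprev := ih hi
        rw [← Fin.val_eq_val] at hprev ⊢
        have hne' : ((C ⟨i, hi⟩ : Fin 2) : ℕ) ≠ ((C ⟨i + 1, h⟩ : Fin 2) : ℕ) :=
          fun he => hne (Fin.ext he)
        have b1 := (C ⟨i, hi⟩ : Fin 2).isLt
        have b2 := (C ⟨i + 1, h⟩ : Fin 2).isLt
        have b3 := (C ⟨0, by omega⟩ : Fin 2).isLt
        omega
    haveI : NeZero n := ⟨by omega⟩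
    have hadj2 : (cycleGraph n).Adj ⟨n - 1, by omega⟩ ⟨0, by omega⟩ := by
      rw [cycleGraph_adj']
      right
      have he : (⟨0, by omega⟩ : Fin n) - ⟨n - 1, by omega⟩ = 1 := by
        rw [sub_eq_iff_eq_add']
        apply Fin.ext
        rw [Fin.add_def, Fin.val_one']
        show 0 = ((n - 1) + 1 % n) % n
        have h1 : 1 % n = 1 := Nat.mod_eq_of_lt (by omega)
        have h2 : n - 1 + 1 = n := by omega
        rw [h1, h2, Nat.mod_self]
      rw [he, Fin.val_one', Nat.mod_eq_of_lt (by omega)]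
    have hne := C.valid hadj2
    have hodd2 : n % 2 = 1 := Nat.odd_iff.mp hodd
    have hkey := (key (n - 1) (by omega)).mpr (by omega)
    exact hne hkey
  have hge : (3 : ℕ∞) ≤ (cycleGraph n).chromaticNumber := by
    by_contra hlt
    push_neg at hlt
    have hle2 : (cycleGraph n).chromaticNumber ≤ ((2 : ℕ) : ℕ∞) := by
      exact_mod_cast Order.le_of_lt_add_one hlt
    exact h2 (chromaticNumber_le_iff_colorable.mp hle2)
  exact le_antisymm (by exact_mod_cast hle) hge

end Coloring

/-- For odd `n ≥ 7` with `n ≡ 1 (mod 3)`,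
`ζ(C_n) = (n-1)(n-4)/3 + ⌈2(n-5)/3⌉ + 1`. -/
theorem zeta_cycle_odd_one_mod_three (n : ℕ) (hn : 7 ≤ n) (hodd : Odd n)
    (hmod : n % 3 = 1) :
    zeta (cycleGraph n) = (n - 1) * (n - 4) / 3 + (2 * (n - 5) + 2) / 3 + 1 := by
  have hchrom := chrom_cycle hn hodd hmod
  obtain ⟨k, hnk⟩ : ∃ k, n = 3 * k + 1 := ⟨n / 3, by omega⟩
  have hk2 : 2 ≤ k := by omega
  have hkk : k ≤ k * k := Nat.le_mul_of_pos_left k (by omega)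
  have hnn : n * n = 9 * (k * k) + 6 * k + 1 := by rw [hnk]; ring
  have hdiv : n / 3 = k := by omega
  -- upper bound
  have hub : ∀ m ∈ {m | ∃ c : Fin n → ℕ, IsChromaticColoring (cycleGraph n) c
      ∧ m = (completionEdges (cycleGraph n) c).ncard}, m ≤ 3 * (k * k) - k - 1 := by
    rintro m ⟨c, ⟨hp, hcard⟩, rfl⟩
    have himg : #(univ.image c) = 3 := by
      have hrange : Set.range c = ↑(univ.image c) := by
        rw [Finset.coe_image, Finset.coe_univ, Set.image_univ]
      rw [hrange, Set.ncard_coe_finset, hchrom] at hcard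
      exact_mod_cast hcard
    obtain ⟨x, y, z, hxy, hxz, hyz, hset⟩ := Finset.card_eq_three.mp himg
    have hnx : x ∉ ({y, z} : Finset ℕ) := by simp [hxy, hxz]
    have hny : y ∉ ({z} : Finset ℕ) := by simp [hyz]
    have hsum : #(univ.filter fun a => c a = x) + #(univ.filter fun a => c a = y)
        + #(univ.filter fun a => c a = z) = n := by
      have := Finset.card_eq_sum_card_image c (univ : Finset (Fin n))
      rw [hset, Finset.sum_insert hnx, Finset.sum_insert hny, Finset.sum_singleton,
        Finset.card_univ, Fintype.card_fin] at this
      omega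
    have hkey := count_key (by omega) c hp
    rw [hset, Finset.sum_insert hnx, Finset.sum_insert hny, Finset.sum_singleton] at hkey
    have hineq := sq_sum_lower _ _ _ n hsum hmod
    omega
  -- the balanced colouring attains the bound
  have hmem : 3 * (k * k) - k - 1 ∈ {m | ∃ c : Fin n → ℕ,
      IsChromaticColoring (cycleGraph n) c
      ∧ m = (completionEdges (cycleGraph n) c).ncard} := by
    refine ⟨cyc3 n, ⟨cyc3_proper hn hmod, ?_⟩, ?_⟩
    · have hrange : Set.range (cyc3 n) = ↑(univ.image (cyc3 n)) := by
        rw [Finset.coe_image, Finset.coe_univ, Set.image_univ]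
      rw [hrange, Set.ncard_coe_finset, cyc3_image hn, hchrom]
      rfl
    · have hkey := count_key (by omega) (cyc3 n) (cyc3_proper hn hmod)
      rw [cyc3_image hn] at hkey
      have hn0 : (0 : ℕ) ∉ ({1, 2} : Finset ℕ) := by decide
      have hn1 : (1 : ℕ) ∉ ({2} : Finset ℕ) := by decide
      rw [Finset.sum_insert hn0, Finset.sum_insert hn1, Finset.sum_singleton] at hkey
      rw [cyc3_fiber hn hmod 0 (by omega), cyc3_fiber hn hmod 1 (by omega),
        cyc3_fiber hn hmod 2 (by omega), hdiv] at hkey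
      rw [if_neg (by norm_num), if_pos rfl, if_neg (by norm_num)] at hkey
      have hexp : (k + 1) * (k + 1) = k * k + 2 * k + 1 := by ring
      omega
  have hzeta : zeta (cycleGraph n) = 3 * (k * k) - k - 1 :=
    le_antisymm (csSup_le ⟨_, hmem⟩ hub) (le_csSup ⟨_, hub⟩ hmem)
  rw [hzeta]
  have h14 : (n - 1) * (n - 4) = 9 * (k * k) - 9 * k := by
    rw [show n - 1 = 3 * k by omega, show n - 4 = 3 * (k - 1) by omega]
    rw [show 3 * k * (3 * (k - 1)) = 9 * (k * (k - 1)) by ring]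
    have h0 : k * (k - 1) = k * k - k * 1 := by rw [← Nat.mul_sub]
    rw [h0]
    omega
  rw [h14]
  omega
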